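/- Let d ≥ 1 be an integer, σ > 0, and let p ≥ 2 be a real number. Let P be the Gaussian measure N(0, σ²·I_d) on ℝ^d (the d-fold product of the centered Gaussian with variance σ² on ℝ). Let C be a finite label set, h : ℝ^d → C measurable, x ∈ ℝ^d, c₁ ∈ C, and let p₁, p₂ ∈ (0,1) with p₂ ≤ p₁ be such that P{Δ : h(x+Δ) = c₁} ≥ p₁ and P{Δ : h(x+Δ) = c} ≤ p₂ for every c ≠ c₁. Then for every δ ∈ ℝ^d with (∑_{i=1}^d |δ_i|^p)^{1/p} < (σ/(2·d^{1/2 − 1/p}))·(Φ^{−1}(p₁) − Φ^{−1}(p₂)), it holds that P{Δ : h(x+δ+Δ) = c₁} > P{Δ : h(x+δ+Δ) = c} for every c ≠ c₁, where Φ^{−1} is the inverse of the standard Gaussian cumulative distribution function. -/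

import Mathlib

open MeasureTheory ProbabilityTheory Real

namespace GaussCert

open scoped ENNReal NNReal
open Set

/-- standard gaussian CDF value as `ℝ≥0∞` -/
noncomputable def Phi (t : ℝ) : ℝ≥0∞ := gaussianReal 0 1 (Set.Iic t)

lemma phi_ne_top (t : ℝ) : Phi t ≠ ∞ := measure_ne_top _ _

lemma phi_strictMono {a b : ℝ} (hab : a < b) : Phi a < Phi b := by
  have hsub : Iic a ∪ Ioc a b = Iic b := Set.Iic_union_Ioc_eq_Iic hab.le
  have hm : gaussianReal 0 1 (Iic b)
      = gaussianReal 0 1 (Iic a) + gaussianReal 0 1 (Ioc a b) := by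
    rw [← hsub, measure_union (Set.Iic_disjoint_Ioc le_rfl) measurableSet_Ioc]
  have hpos : 0 < gaussianReal 0 1 (Ioc a b) := by
    rw [pos_iff_ne_zero]
    intro h0
    have hv : (volume : Measure ℝ) (Ioc a b) = 0 :=
      gaussianReal_absolutelyContinuous' 0 one_ne_zero h0
    rw [Real.volume_Ioc] at hv
    exact (ENNReal.ofReal_pos.mpr (by linarith)).ne' hv
  rw [Phi, Phi, hm]
  exact ENNReal.lt_add_right (measure_ne_top _ _) hpos.ne' 

/-- one-dimensional density-ratio representation of a shifted gaussian -/
lemma gaussianReal_eq_withDensity (m : ℝ) {v : ℝ≥0} (hv : v ≠ 0) :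
    gaussianReal m v = (gaussianReal 0 v).withDensity
      (fun x => ENNReal.ofReal (rexp ((m * x - m ^ 2 / 2) / v))) := by
  have hL : Measurable fun x : ℝ => ENNReal.ofReal (rexp ((m * x - m ^ 2 / 2) / v)) := by
    exact ((((measurable_id.const_mul m).sub_const _).div_const _).exp).ennreal_ofReal
  rw [gaussianReal_of_var_ne_zero m hv, gaussianReal_of_var_ne_zero 0 hv,
    ← withDensity_mul _ (measurable_gaussianPDF 0 v) hL]
  congr 1
  funext y
  simp only [Pi.mul_apply, gaussianPDF]
  rw [← ENNReal.ofReal_mul (gaussianPDFReal_nonneg _ _ _)]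
  congr 1
  have hv' : (v : ℝ) ≠ 0 := NNReal.coe_ne_zero.mpr hv
  simp only [gaussianPDFReal]
  have hmul : ∀ A B C : ℝ, A * rexp B * rexp C = A * rexp (B + C) := by
    intro A B C; rw [mul_assoc, ← Real.exp_add]
  rw [hmul]
  congr 1
  field_simp
  ring

/-- pointwise convolution identity for gaussian densities -/
lemma gaussianPDFReal_conv (u x : ℝ) {v₁ v₂ : ℝ≥0} (h₁ : v₁ ≠ 0) (h₂ : v₂ ≠ 0) :
    gaussianPDFReal 0 v₁ x * gaussianPDFReal 0 v₂ (u - x)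
      = gaussianPDFReal 0 (v₁ + v₂) u
        * gaussianPDFReal ((v₁ : ℝ) / ((v₁ : ℝ) + (v₂ : ℝ)) * u) (v₁ * v₂ / (v₁ + v₂)) x := by
  have hv₁ : (0 : ℝ) < v₁ := NNReal.coe_pos.mpr (lt_of_le_of_ne (zero_le : (0:ℝ≥0) ≤ v₁) (Ne.symm h₁))
  have hv₂ : (0 : ℝ) < v₂ := NNReal.coe_pos.mpr (lt_of_le_of_ne (zero_le : (0:ℝ≥0) ≤ v₂) (Ne.symm h₂))
  have hs : (0 : ℝ) < (v₁ : ℝ) + v₂ := by linarith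
  have hwpos : (0 : ℝ) < (v₁ : ℝ) * v₂ / ((v₁ : ℝ) + v₂) := by positivity
  simp only [gaussianPDFReal]
  have hw : ((v₁ * v₂ / (v₁ + v₂) : ℝ≥0) : ℝ) = (v₁ : ℝ) * v₂ / ((v₁ : ℝ) + v₂) := by
    push_cast; ring
  have hvs : ((v₁ + v₂ : ℝ≥0) : ℝ) = (v₁ : ℝ) + v₂ := by push_cast; ring
  rw [hw, hvs, mul_mul_mul_comm, mul_mul_mul_comm ((Real.sqrt (2 * π * ((v₁:ℝ) + v₂)))⁻¹)]
  congr 1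
  · rw [← mul_inv, ← mul_inv, ← Real.sqrt_mul (by positivity), ← Real.sqrt_mul (by positivity)]
    congr 2
    field_simp
  · rw [← Real.exp_add, ← Real.exp_add]
    congr 1
    field_simp
    ring

/-- convolution of centered gaussians -/
lemma gaussian_conv_zero {v₁ v₂ : ℝ≥0} (h₁ : v₁ ≠ 0) (h₂ : v₂ ≠ 0) :
    ((gaussianReal 0 v₁).prod (gaussianReal 0 v₂)).map (fun z : ℝ × ℝ => z.1 + z.2)
      = gaussianReal 0 (v₁ + v₂) := by
  have h₁₂ : v₁ + v₂ ≠ 0 := fun hc => h₁ (by simpa using (add_eq_zero.mp hc).1)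
  have hwne : v₁ * v₂ / (v₁ + v₂) ≠ 0 := by
    rw [ne_eq, div_eq_zero_iff, mul_eq_zero]
    simp [h₁, h₂, h₁₂]
  have hadd : Measurable fun z : ℝ × ℝ => z.1 + z.2 := measurable_fst.add measurable_snd
  haveI : IsProbabilityMeasure
      (((gaussianReal 0 v₁).prod (gaussianReal 0 v₂)).map (fun z : ℝ × ℝ => z.1 + z.2)) :=
    Measure.isProbabilityMeasure_map hadd.aemeasurable
  refine Measure.ext_of_Iic _ _ (fun t => ?_)
  have hindm : Measurable fun u : ℝ => (Iic t).indicator (fun _ => (1 : ℝ≥0∞)) u :=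
    measurable_const.indicator measurableSet_Iic
  have hF : Measurable fun z : ℝ × ℝ =>
      (Iic t).indicator (fun _ => (1 : ℝ≥0∞)) (z.1 + z.2) * gaussianPDF 0 v₂ z.2 :=
    (hindm.comp hadd).mul ((measurable_gaussianPDF 0 v₂).comp measurable_snd)
  have hG : Measurable fun x : ℝ =>
      ∫⁻ y, (Iic t).indicator (fun _ => (1 : ℝ≥0∞)) (x + y) * gaussianPDF 0 v₂ y :=
    Measurable.lintegral_prod_right hF
  calc (((gaussianReal 0 v₁).prod (gaussianReal 0 v₂)).map (fun z : ℝ × ℝ => z.1 + z.2)) (Iic t)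
      = ((gaussianReal 0 v₁).prod (gaussianReal 0 v₂))
          ((fun z : ℝ × ℝ => z.1 + z.2) ⁻¹' Iic t) :=
        Measure.map_apply hadd measurableSet_Iic
    _ = ∫⁻ x, gaussianReal 0 v₂ (Prod.mk x ⁻¹' ((fun z : ℝ × ℝ => z.1 + z.2) ⁻¹' Iic t))
          ∂(gaussianReal 0 v₁) := Measure.prod_apply (hadd measurableSet_Iic)
    _ = ∫⁻ x, ∫⁻ y, (Iic t).indicator (fun _ => (1 : ℝ≥0∞)) (x + y) * gaussianPDF 0 v₂ y
          ∂(volume) ∂(gaussianReal 0 v₁) := by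
        refine lintegral_congr fun x => ?_
        have hpre : Prod.mk x ⁻¹' ((fun z : ℝ × ℝ => z.1 + z.2) ⁻¹' Iic t) = Iic (t - x) := by
          ext y
          simp only [Set.mem_preimage, Set.mem_Iic]
          constructor <;> intro <;> linarith
        rw [hpre, gaussianReal_apply 0 h₂, ← lintegral_indicator measurableSet_Iic]
        refine lintegral_congr fun y => ?_
        by_cases hy : y ∈ Iic (t - x)
        · rw [Set.indicator_of_mem hy,
            Set.indicator_of_mem (Set.mem_Iic.mpr (by simp only [Set.mem_Iic] at hy; linarith)),
            one_mul]
        · rw [Set.indicator_of_notMem hy, Set.indicator_of_notMem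
            (fun hc => hy (Set.mem_Iic.mpr (by simp only [Set.mem_Iic] at hc; linarith))),
            zero_mul]
    _ = ∫⁻ x, gaussianPDF 0 v₁ x *
          ∫⁻ y, (Iic t).indicator (fun _ => (1 : ℝ≥0∞)) (x + y) * gaussianPDF 0 v₂ y
          ∂(volume) ∂(volume) := by
        rw [gaussianReal_of_var_ne_zero 0 h₁,
          lintegral_withDensity_eq_lintegral_mul _ (measurable_gaussianPDF 0 v₁) hG]
        rfl
    _ = ∫⁻ x, ∫⁻ u, (Iic t).indicator (fun _ => (1 : ℝ≥0∞)) u *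
          (gaussianPDF 0 v₁ x * gaussianPDF 0 v₂ (u - x)) ∂(volume) ∂(volume) := by
        refine lintegral_congr fun x => ?_
        have hfy : Measurable fun y : ℝ =>
            (Iic t).indicator (fun _ => (1 : ℝ≥0∞)) (x + y) * gaussianPDF 0 v₂ y :=
          (hindm.comp (measurable_const_add x)).mul (measurable_gaussianPDF 0 v₂)
        rw [← lintegral_const_mul _ hfy]
        have hptw : ∀ y : ℝ, gaussianPDF 0 v₁ x *
            ((Iic t).indicator (fun _ => (1 : ℝ≥0∞)) (x + y) * gaussianPDF 0 v₂ y)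
            = (fun u => (Iic t).indicator (fun _ => (1 : ℝ≥0∞)) u *
                (gaussianPDF 0 v₁ x * gaussianPDF 0 v₂ (u - x))) (x + y) := by
          intro y
          simp only [add_sub_cancel_left]
          ring
        simp_rw [hptw]
        exact lintegral_add_left_eq_self (μ := volume)
          (fun u => (Iic t).indicator (fun _ => (1 : ℝ≥0∞)) u *
            (gaussianPDF 0 v₁ x * gaussianPDF 0 v₂ (u - x))) x
    _ = ∫⁻ u, ∫⁻ x, (Iic t).indicator (fun _ => (1 : ℝ≥0∞)) u *
          (gaussianPDF 0 v₁ x * gaussianPDF 0 v₂ (u - x)) ∂(volume) ∂(volume) := by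
        refine lintegral_lintegral_swap ?_
        refine Measurable.aemeasurable ?_
        exact ((hindm.comp measurable_snd)).mul
          (((measurable_gaussianPDF 0 v₁).comp measurable_fst).mul
            ((measurable_gaussianPDF 0 v₂).comp (measurable_snd.sub measurable_fst)))
    _ = ∫⁻ u, (Iic t).indicator (fun _ => (1 : ℝ≥0∞)) u * gaussianPDF 0 (v₁ + v₂) u
          ∂(volume) := by
        refine lintegral_congr fun u => ?_
        have hfx : Measurable fun x : ℝ => gaussianPDF 0 v₁ x * gaussianPDF 0 v₂ (u - x) :=
          (measurable_gaussianPDF 0 v₁).mul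
            ((measurable_gaussianPDF 0 v₂).comp (measurable_const.sub measurable_id))
        rw [lintegral_const_mul _ hfx]
        congr 1
        have hptw : ∀ x : ℝ, gaussianPDF 0 v₁ x * gaussianPDF 0 v₂ (u - x)
            = gaussianPDF 0 (v₁ + v₂) u *
              gaussianPDF ((v₁ : ℝ) / ((v₁ : ℝ) + (v₂ : ℝ)) * u) (v₁ * v₂ / (v₁ + v₂)) x := by
          intro x
          simp only [gaussianPDF]
          rw [← ENNReal.ofReal_mul (gaussianPDFReal_nonneg _ _ _),
            ← ENNReal.ofReal_mul (gaussianPDFReal_nonneg _ _ _),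
            gaussianPDFReal_conv u x h₁ h₂]
        simp_rw [hptw]
        rw [lintegral_const_mul _ (measurable_gaussianPDF _ _),
          lintegral_gaussianPDF_eq_one _ hwne, mul_one]
    _ = gaussianReal 0 (v₁ + v₂) (Iic t) := by
        have hptw : ∀ u : ℝ, (Iic t).indicator (fun _ => (1 : ℝ≥0∞)) u *
            gaussianPDF 0 (v₁ + v₂) u = (Iic t).indicator (gaussianPDF 0 (v₁ + v₂)) u := by
          intro u
          by_cases hu : u ∈ Iic t
          · rw [Set.indicator_of_mem hu, Set.indicator_of_mem hu, one_mul]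
          · rw [Set.indicator_of_notMem hu, Set.indicator_of_notMem hu, zero_mul]
        simp_rw [hptw]
        rw [lintegral_indicator measurableSet_Iic, ← gaussianReal_apply 0 h₁₂]

/-- convolution of gaussians -/
lemma gaussian_conv (m₁ m₂ : ℝ) (v₁ v₂ : ℝ≥0) :
    ((gaussianReal m₁ v₁).prod (gaussianReal m₂ v₂)).map (fun z : ℝ × ℝ => z.1 + z.2)
      = gaussianReal (m₁ + m₂) (v₁ + v₂) := by
  have hadd : Measurable fun z : ℝ × ℝ => z.1 + z.2 := measurable_fst.add measurable_snd
  by_cases h₁ : v₁ = 0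
  · subst h₁
    rw [gaussianReal_zero_var, Measure.dirac_prod,
      Measure.map_map hadd measurable_prodMk_left]
    have : ((fun z : ℝ × ℝ => z.1 + z.2) ∘ fun y : ℝ => (m₁, y)) = fun y : ℝ => y + m₁ := by
      funext y; simp [add_comm]
    rw [this, gaussianReal_map_add_const, zero_add, add_comm m₂ m₁]
  by_cases h₂ : v₂ = 0
  · subst h₂
    rw [gaussianReal_zero_var, Measure.prod_dirac,
      Measure.map_map hadd measurable_prodMk_right]
    have : ((fun z : ℝ × ℝ => z.1 + z.2) ∘ fun x : ℝ => (x, m₂)) = fun x : ℝ => x + m₂ := by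
      funext y; simp
    rw [this, gaussianReal_map_add_const, add_zero]
  have e₁ : gaussianReal m₁ v₁ = (gaussianReal 0 v₁).map (· + m₁) := by
    rw [gaussianReal_map_add_const, zero_add]
  have e₂ : gaussianReal m₂ v₂ = (gaussianReal 0 v₂).map (· + m₂) := by
    rw [gaussianReal_map_add_const, zero_add]
  rw [e₁, e₂, Measure.map_prod_map _ _ (measurable_add_const m₁)
    (measurable_add_const m₂), Measure.map_map hadd
    (Measurable.prodMap (measurable_add_const m₁) (measurable_add_const m₂))]
  have : ((fun z : ℝ × ℝ => z.1 + z.2) ∘ Prod.map (· + m₁) (· + m₂))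
      = (fun y : ℝ => y + (m₁ + m₂)) ∘ fun z : ℝ × ℝ => z.1 + z.2 := by
    funext z
    simp [Prod.map]
    ring
  rw [this, ← Measure.map_map (measurable_add_const (m₁ + m₂)) hadd,
    gaussian_conv_zero h₁ h₂, gaussianReal_map_add_const, zero_add]

/-- pushforward of an isotropic gaussian under a linear functional -/
lemma pi_map_sum : ∀ (n : ℕ) (a m : Fin n → ℝ) (v : ℝ≥0),
    (Measure.pi fun i => gaussianReal (m i) v).map (fun Δ : Fin n → ℝ => ∑ i, a i * Δ i)
      = gaussianReal (∑ i, a i * m i) ((∑ i, a i ^ 2).toNNReal * v) := by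
  intro n
  induction n with
  | zero =>
    intro a m v
    have hz : (fun Δ : Fin 0 → ℝ => ∑ i, a i * Δ i) = fun _ => (0 : ℝ) := by
      funext Δ; simp
    rw [hz, Measure.map_const]
    simp [Fin.sum_univ_zero, Real.toNNReal_zero]
  | succ n ih =>
    intro a m v
    have hmp := measurePreserving_piFinSuccAbove (fun i => gaussianReal (m i) v) 0
    set e := MeasurableEquiv.piFinSuccAbove (fun _ : Fin (n + 1) => ℝ) 0 with he
    have hsum_meas : Measurable fun z : Fin n → ℝ => ∑ j, a j.succ * z j :=
      Finset.measurable_sum _ fun j _ => (measurable_pi_apply j).const_mul _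
    have hGmeas : Measurable fun q : ℝ × (Fin n → ℝ) => a 0 * q.1 + ∑ j, a j.succ * q.2 j :=
      (measurable_fst.const_mul _).add (hsum_meas.comp measurable_snd)
    have hcomp : (fun Δ : Fin (n + 1) → ℝ => ∑ i, a i * Δ i)
        = (fun q : ℝ × (Fin n → ℝ) => a 0 * q.1 + ∑ j, a j.succ * q.2 j) ∘ e := by
      funext Δ
      rw [Fin.sum_univ_succ]
      simp [he, MeasurableEquiv.piFinSuccAbove_apply, Fin.insertNthEquiv,
        Fin.removeNth, Fin.tail, Fin.zero_succAbove]
    rw [hcomp, ← Measure.map_map hGmeas e.measurable, hmp.map_eq]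
    have htail : (fun j : Fin n => gaussianReal (m ((0 : Fin (n + 1)).succAbove j)) v)
        = fun j => gaussianReal (m j.succ) v := by
      funext j; rw [Fin.zero_succAbove]
    rw [htail]
    have hsplit : (fun q : ℝ × (Fin n → ℝ) => a 0 * q.1 + ∑ j, a j.succ * q.2 j)
        = (fun z : ℝ × ℝ => z.1 + z.2)
          ∘ Prod.map (fun y : ℝ => a 0 * y) (fun z : Fin n → ℝ => ∑ j, a j.succ * z j) := rfl
    rw [hsplit, ← Measure.map_map (show Measurable fun z : ℝ × ℝ => z.1 + z.2 from measurable_fst.add measurable_snd)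
      (Measurable.prodMap (measurable_const_mul _) hsum_meas),
      ← Measure.map_prod_map _ _ (measurable_const_mul _) hsum_meas,
      gaussianReal_map_const_mul,
      ih (fun j => a j.succ) (fun j => m j.succ) v, gaussian_conv]
    congr 1
    · rw [Fin.sum_univ_succ]
    · rw [← add_mul]
      congr 1
      rw [← NNReal.coe_inj, NNReal.coe_add,
        Real.coe_toNNReal _ (Finset.sum_nonneg fun _ _ => sq_nonneg _),
        Real.coe_toNNReal _ (Finset.sum_nonneg fun _ _ => sq_nonneg _),
        NNReal.coe_mk, Fin.sum_univ_succ]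

/-- Tonelli: lintegral of a product of coordinate functions over a product measure -/
lemma lintegral_pi_prod : ∀ (n : ℕ) (μ : Fin n → Measure ℝ) (_ : ∀ i, SigmaFinite (μ i))
    (g : Fin n → ℝ → ℝ≥0∞) (_ : ∀ i, Measurable (g i)),
    ∫⁻ z, ∏ i, g i (z i) ∂Measure.pi μ = ∏ i, ∫⁻ t, g i t ∂(μ i) := by
  intro n
  induction n with
  | zero =>
    intro μ hsf g hg
    rw [Measure.pi_of_empty]
    simp only [Finset.univ_eq_empty, Finset.prod_empty, lintegral_one]
    simp
  | succ n ih =>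
    intro μ hsf g hg
    haveI : ∀ i, SigmaFinite (μ i) := hsf
    have hmp := measurePreserving_piFinSuccAbove μ 0
    set e := MeasurableEquiv.piFinSuccAbove (fun _ : Fin (n + 1) => ℝ) 0 with he
    have htm : Measurable fun z : Fin n → ℝ => ∏ j, g j.succ (z j) :=
      Finset.measurable_prod _ fun j _ => (hg j.succ).comp (measurable_pi_apply j)
    have hGmeas : Measurable fun q : ℝ × (Fin n → ℝ) => g 0 q.1 * ∏ j, g j.succ (q.2 j) :=
      ((hg 0).comp measurable_fst).mul (htm.comp measurable_snd)
    calc ∫⁻ z, ∏ i, g i (z i) ∂Measure.pi μ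
        = ∫⁻ q, g 0 q.1 * ∏ j, g j.succ (q.2 j)
            ∂((μ 0).prod (Measure.pi fun j => μ ((0 : Fin (n + 1)).succAbove j))) := by
          rw [← hmp.lintegral_comp hGmeas]
          refine lintegral_congr fun z => ?_
          rw [Fin.prod_univ_succ]
          simp [he, MeasurableEquiv.piFinSuccAbove_apply, Fin.insertNthEquiv,
            Fin.removeNth, Fin.tail, Fin.zero_succAbove]
      _ = (∫⁻ y, g 0 y ∂(μ 0)) * ∏ j, ∫⁻ t, g j.succ t ∂(μ ((0 : Fin (n + 1)).succAbove j)) := by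
          rw [lintegral_prod_mul (hg 0).aemeasurable htm.aemeasurable,
            ih (fun j => μ ((0 : Fin (n + 1)).succAbove j)) (fun j => inferInstance)
              (fun j => g j.succ) (fun j => hg j.succ)]
      _ = ∏ i, ∫⁻ t, g i t ∂(μ i) := by
          rw [Fin.prod_univ_succ]
          simp only [Fin.zero_succAbove]

/-- density-ratio representation of the shifted product gaussian -/
lemma pi_gauss_withDensity {n : ℕ} (δ : Fin n → ℝ) {v : ℝ≥0} (hv : v ≠ 0) :
    Measure.pi (fun i : Fin n => gaussianReal (δ i) v)
      = (Measure.pi fun _ : Fin n => gaussianReal 0 v).withDensity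
        (fun z => ENNReal.ofReal (rexp (((∑ i, δ i * z i) - (∑ i, δ i ^ 2) / 2) / v))) := by
  have hLi : ∀ m : ℝ, Measurable fun t : ℝ => ENNReal.ofReal (rexp ((m * t - m ^ 2 / 2) / (v : ℝ))) :=
    fun m => ((((measurable_id.const_mul m).sub_const _).div_const _).exp).ennreal_ofReal
  refine Measure.pi_eq fun s hs => ?_
  rw [withDensity_apply _ (MeasurableSet.univ_pi hs), ← lintegral_indicator (MeasurableSet.univ_pi hs)]
  have hptw : (Set.pi Set.univ s).indicator
      (fun z : Fin n → ℝ => ENNReal.ofReal (rexp (((∑ i, δ i * z i) - (∑ i, δ i ^ 2) / 2) / v)))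
      = fun z => ∏ i, (s i).indicator
          (fun t => ENNReal.ofReal (rexp ((δ i * t - δ i ^ 2 / 2) / (v : ℝ)))) (z i) := by
    funext z
    by_cases hz : z ∈ Set.pi Set.univ s
    · rw [Set.indicator_of_mem hz]
      have : ∀ i : Fin n, (s i).indicator
          (fun t => ENNReal.ofReal (rexp ((δ i * t - δ i ^ 2 / 2) / (v : ℝ)))) (z i)
          = ENNReal.ofReal (rexp ((δ i * z i - δ i ^ 2 / 2) / (v : ℝ))) := fun i =>
        Set.indicator_of_mem (hz i (Set.mem_univ i)) _
      rw [Finset.prod_congr rfl fun i _ => this i,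
        ← ENNReal.ofReal_prod_of_nonneg (fun i _ => (Real.exp_pos _).le), ← Real.exp_sum]
      congr 2
      rw [← Finset.sum_div, Finset.sum_sub_distrib, ← Finset.sum_div]
    · rw [Set.indicator_of_notMem hz]
      obtain ⟨i, hi⟩ := by
        simpa only [Set.mem_pi, Set.mem_univ, forall_true_left, not_forall] using hz
      exact (Finset.prod_eq_zero (Finset.mem_univ i)
        (Set.indicator_of_notMem hi _)).symm
  rw [hptw, lintegral_pi_prod n _ (fun _ => inferInstance) _
    (fun i => ((hLi (δ i)).indicator (hs i)))]
  refine Finset.prod_congr rfl fun i _ => ?_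
  rw [lintegral_indicator (hs i), ← withDensity_apply _ (hs i),
    ← gaussianReal_eq_withDensity (δ i) hv]

/-- translating the product gaussian -/
lemma pi_map_add {n : ℕ} (δ : Fin n → ℝ) (v : ℝ≥0) :
    (Measure.pi fun _ : Fin n => gaussianReal 0 v).map (fun Δ => δ + Δ)
      = Measure.pi (fun i : Fin n => gaussianReal (δ i) v) := by
  have haddm : Measurable fun Δ : Fin n → ℝ => δ + Δ :=
    measurable_pi_lambda _ fun i => show Measurable fun c : Fin n → ℝ => δ i + c i from measurable_const.add (measurable_pi_apply i)
  refine (Measure.pi_eq fun s hs => ?_).symm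
  rw [Measure.map_apply haddm (MeasurableSet.univ_pi hs)]
  have hpre : (fun Δ : Fin n → ℝ => δ + Δ) ⁻¹' (Set.pi Set.univ s)
      = Set.pi Set.univ (fun i => (fun t => δ i + t) ⁻¹' s i) := by
    ext z
    simp [Set.mem_pi]
  rw [hpre, Measure.pi_pi]
  refine Finset.prod_congr rfl fun i _ => ?_
  rw [← Measure.map_apply (measurable_const_add (δ i)) (hs i),
    gaussianReal_map_const_add, zero_add]

/-- abstract Neyman–Pearson-type comparison -/
lemma np_core {α : Type*} [MeasurableSpace α] (μ : Measure α) [IsFiniteMeasure μ]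
    {L : α → ℝ≥0∞} (hL : Measurable L) {A H : Set α} (hA : MeasurableSet A)
    (hH : MeasurableSet H) (k : ℝ≥0∞)
    (hAH : ∀ a ∈ A \ H, k ≤ L a) (hHA : ∀ a ∈ H \ A, L a ≤ k) (hμ : μ H ≤ μ A) :
    μ.withDensity L H ≤ μ.withDensity L A := by
  have hknet : k ≠ ∞ ∨ True := Or.inr trivial
  have hAd : MeasurableSet (A \ H) := hA.diff hH
  have hHd : MeasurableSet (H \ A) := hH.diff hA
  have h1 : k * μ (A \ H) ≤ μ.withDensity L (A \ H) := by
    rw [withDensity_apply _ hAd, ← setLIntegral_const (A \ H) k]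
    exact setLIntegral_mono hL hAH
  have h2 : μ.withDensity L (H \ A) ≤ k * μ (H \ A) := by
    rw [withDensity_apply _ hHd, ← setLIntegral_const (H \ A) k]
    exact setLIntegral_mono measurable_const hHA
  have h3 : μ (H \ A) ≤ μ (A \ H) := by
    have e1 : μ (A ∩ H) + μ (A \ H) = μ A := measure_inter_add_diff A hH
    have e2 : μ (H ∩ A) + μ (H \ A) = μ H := measure_inter_add_diff H hA
    rw [Set.inter_comm] at e2
    have : μ (A ∩ H) + μ (H \ A) ≤ μ (A ∩ H) + μ (A \ H) := by
      rw [e1, e2]; exact hμ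
    exact (ENNReal.add_le_add_iff_left (measure_ne_top μ _)).mp this
  calc μ.withDensity L H
      = μ.withDensity L (H ∩ A) + μ.withDensity L (H \ A) :=
        (measure_inter_add_diff H hA).symm
    _ ≤ μ.withDensity L (H ∩ A) + k * μ (H \ A) := add_le_add_right h2 _
    _ ≤ μ.withDensity L (H ∩ A) + k * μ (A \ H) :=
        add_le_add_right (mul_le_mul_right h3 k) _
    _ ≤ μ.withDensity L (H ∩ A) + μ.withDensity L (A \ H) := add_le_add_right h1 _
    _ = μ.withDensity L (A ∩ H) + μ.withDensity L (A \ H) := by rw [Set.inter_comm]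
    _ = μ.withDensity L A := measure_inter_add_diff A hH

/-- CDF of a gaussian via the standard gaussian CDF -/
lemma gauss_Iic (m t : ℝ) {v : ℝ≥0} (hv : v ≠ 0) :
    gaussianReal m v (Iic t) = Phi ((t - m) / Real.sqrt v) := by
  have hvpos : (0 : ℝ) < v := NNReal.coe_pos.mpr (lt_of_le_of_ne (zero_le : (0:ℝ≥0) ≤ v) (Ne.symm hv))
  have hs : (0 : ℝ) < Real.sqrt v := Real.sqrt_pos.mpr hvpos
  have h1 : (gaussianReal 0 1).map (fun y => Real.sqrt v * y) = gaussianReal 0 v := by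
    rw [gaussianReal_map_const_mul]
    congr 1
    · ring
    · ext
      simp [Real.sq_sqrt hvpos.le]
  have hmap : (gaussianReal 0 1).map (fun y => Real.sqrt v * y + m) = gaussianReal m v := by
    have := Measure.map_map (μ := gaussianReal 0 1) (measurable_id.add_const m)
      (measurable_const_mul (Real.sqrt v))
    simp only [Function.comp_def, id_eq] at this
    rw [← this, h1, gaussianReal_map_add_const, zero_add]
  rw [← hmap, Measure.map_apply ((measurable_const_mul _).add_const m) measurableSet_Iic]
  have hpre : (fun y : ℝ => Real.sqrt v * y + m) ⁻¹' Iic t = Iic ((t - m) / Real.sqrt v) := by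
    ext y
    simp only [Set.mem_preimage, Set.mem_Iic]
    rw [le_div_iff₀ hs]
    constructor <;> intro <;> nlinarith
  rw [hpre, Phi]

lemma gauss_Ici (m t : ℝ) {v : ℝ≥0} (hv : v ≠ 0) :
    gaussianReal m v (Ici t) = Phi ((m - t) / Real.sqrt v) := by
  have hvpos : (0 : ℝ) < v := NNReal.coe_pos.mpr (lt_of_le_of_ne (zero_le : (0:ℝ≥0) ≤ v) (Ne.symm hv))
  have hs : (0 : ℝ) < Real.sqrt v := Real.sqrt_pos.mpr hvpos
  have h1 : (gaussianReal 0 1).map (fun y => -Real.sqrt v * y) = gaussianReal 0 v := by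
    rw [gaussianReal_map_const_mul]
    congr 1
    · ring
    · ext
      simp [Real.sq_sqrt hvpos.le]
  have hmap : (gaussianReal 0 1).map (fun y => -Real.sqrt v * y + m) = gaussianReal m v := by
    have := Measure.map_map (μ := gaussianReal 0 1) (measurable_id.add_const m)
      (measurable_const_mul (-Real.sqrt v))
    simp only [Function.comp_def, id_eq] at this
    rw [← this, h1, gaussianReal_map_add_const, zero_add]
  rw [← hmap, Measure.map_apply ((measurable_const_mul _).add_const m) measurableSet_Ici]
  have hpre : (fun y : ℝ => -Real.sqrt v * y + m) ⁻¹' Ici t = Iic ((m - t) / Real.sqrt v) := by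
    ext y
    simp only [Set.mem_preimage, Set.mem_Ici, Set.mem_Iic]
    rw [le_div_iff₀ hs]
    constructor <;> intro <;> nlinarith
  rw [hpre, Phi]

/-- comparison of the ℓ₂ norm with the ℓ_p norm, `p ≥ 2` -/
lemma sqrt_sum_sq_le {d : ℕ} {p : ℝ} (hp : 2 ≤ p) (δ : Fin d → ℝ) :
    Real.sqrt (∑ i, δ i ^ 2)
      ≤ (d : ℝ) ^ ((1 : ℝ) / 2 - 1 / p) * (∑ i, |δ i| ^ p) ^ (1 / p) := by
  have hp0 : (0 : ℝ) < p := by linarith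
  have hq : (1 : ℝ) ≤ p / 2 := by linarith
  have key := Real.inner_le_weight_mul_Lp_of_nonneg Finset.univ hq (fun _ => (1 : ℝ))
    (fun i => δ i ^ 2) (fun _ => zero_le_one) (fun i => sq_nonneg _)
  simp only [one_mul, Finset.sum_const, Finset.card_univ, Fintype.card_fin, nsmul_eq_mul,
    mul_one] at key
  have hpow : ∀ i : Fin d, ((δ i ^ 2 : ℝ)) ^ (p / 2) = |δ i| ^ p := by
    intro i
    rw [← sq_abs, ← Real.rpow_natCast |δ i| 2, ← Real.rpow_mul (abs_nonneg _)]
    norm_num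
    rw [mul_div_cancel₀ _ (two_ne_zero)]
  simp only [hpow] at key
  have hinv : (p / 2)⁻¹ = 2 / p := by
    rw [inv_div]
  rw [hinv] at key
  have hS : (0 : ℝ) ≤ ∑ i, |δ i| ^ p :=
    Finset.sum_nonneg fun i _ => Real.rpow_nonneg (abs_nonneg _) _
  have hd0 : (0 : ℝ) ≤ (d : ℝ) := Nat.cast_nonneg _
  calc Real.sqrt (∑ i, δ i ^ 2)
      ≤ Real.sqrt ((d : ℝ) ^ (1 - 2 / p) * (∑ i, |δ i| ^ p) ^ (2 / p)) :=
        Real.sqrt_le_sqrt key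
    _ = (d : ℝ) ^ ((1 : ℝ) / 2 - 1 / p) * (∑ i, |δ i| ^ p) ^ (1 / p) := by
        rw [Real.sqrt_mul (Real.rpow_nonneg hd0 _), Real.sqrt_eq_rpow,
          Real.sqrt_eq_rpow, ← Real.rpow_mul hd0, ← Real.rpow_mul hS]
        have hpne : p ≠ 0 := by positivity
        have e1 : (1 - 2 / p) * (1 / 2) = 1 / 2 - 1 / p := by
          ring
        have e2 : 2 / p * (1 / 2) = 1 / p := by
          ring
        rw [e1, e2]

end GaussCert

open scoped ENNReal NNReal

/-- **Equation (1): the ℓ_p-radius certified by isotropic Gaussian smoothing** (`p ≥ 2`).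
Here `t₁ = Φ⁻¹(p₁)` and `t₂ = Φ⁻¹(p₂)` are expressed via the standard Gaussian CDF
`t ↦ (gaussianReal 0 1) (Iic t)`. If the smoothed top-class probability at `x` is at
least `p₁` and every other class has probability at most `p₂`, then the smoothed
prediction at `x + δ` is still `c₁` whenever
`‖δ‖_p < (σ/(2 d^{1/2−1/p}))(Φ⁻¹(p₁) − Φ⁻¹(p₂))`. -/
theorem gaussian_smoothing_lp_certificate
    (d : ℕ) (hd : 1 ≤ d) (σ : NNReal) (hσ : 0 < σ) (p : ℝ) (hp : 2 ≤ p)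
    {C : Type*} [Fintype C] [MeasurableSpace C] [MeasurableSingletonClass C]
    (h : (Fin d → ℝ) → C) (hmeas : Measurable h)
    (x : Fin d → ℝ) (c₁ : C) (p₁ p₂ : ℝ)
    (hp₁ : p₁ ∈ Set.Ioo (0 : ℝ) 1) (hp₂ : p₂ ∈ Set.Ioo (0 : ℝ) 1) (hle : p₂ ≤ p₁)
    (t₁ t₂ : ℝ)
    (ht₁ : ((gaussianReal 0 1) (Set.Iic t₁)).toReal = p₁)
    (ht₂ : ((gaussianReal 0 1) (Set.Iic t₂)).toReal = p₂)
    (hc₁ : ENNReal.ofReal p₁ ≤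
      Measure.pi (fun _ : Fin d => gaussianReal 0 (σ ^ 2)) {Δ | h (x + Δ) = c₁})
    (hother : ∀ c : C, c ≠ c₁ →
      Measure.pi (fun _ : Fin d => gaussianReal 0 (σ ^ 2)) {Δ | h (x + Δ) = c} ≤
        ENNReal.ofReal p₂)
    (δ : Fin d → ℝ)
    (hδ : (∑ i, |δ i| ^ p) ^ (1 / p) <
      (σ : ℝ) / (2 * (d : ℝ) ^ ((1 : ℝ) / 2 - 1 / p)) * (t₁ - t₂)) :
    ∀ c : C, c ≠ c₁ →
      Measure.pi (fun _ : Fin d => gaussianReal 0 (σ ^ 2)) {Δ | h (x + δ + Δ) = c} <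
        Measure.pi (fun _ : Fin d => gaussianReal 0 (σ ^ 2)) {Δ | h (x + δ + Δ) = c₁} := by
  intro c hc
  set v : ℝ≥0 := σ ^ 2 with hvdef
  have hv : v ≠ 0 := pow_ne_zero 2 hσ.ne'
  have hσR : (0 : ℝ) < σ := NNReal.coe_pos.mpr hσ
  have hvposR : (0 : ℝ) < (v : ℝ) := NNReal.coe_pos.mpr (pow_pos hσ 2)
  set μ : Measure (Fin d → ℝ) := Measure.pi (fun _ : Fin d => gaussianReal 0 v) with hμdef
  haveI : IsProbabilityMeasure μ := by rw [hμdef]; infer_instance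
  have hA : ∀ c' : C, MeasurableSet {Δ : Fin d → ℝ | h (x + Δ) = c'} := by
    intro c'
    have hxadd : Measurable fun Δ : Fin d → ℝ => x + Δ :=
      measurable_pi_lambda _ fun i => show Measurable fun c : Fin d → ℝ => x i + c i from measurable_const.add (measurable_pi_apply i)
    exact (hmeas.comp hxadd) (measurableSet_singleton c')
  have haddm : Measurable fun Δ : Fin d → ℝ => δ + Δ :=
    measurable_pi_lambda _ fun i => show Measurable fun c : Fin d → ℝ => δ i + c i from measurable_const.add (measurable_pi_apply i)
  have hshift : ∀ c' : C, μ {Δ | h (x + δ + Δ) = c'}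
      = (Measure.pi fun i => gaussianReal (δ i) v) {Δ | h (x + Δ) = c'} := by
    intro c'
    rw [← GaussCert.pi_map_add δ v, Measure.map_apply haddm (hA c'), hμdef]
    congr 1
    ext Δ
    simp only [Set.mem_preimage, Set.mem_setOf_eq]
    rw [← add_assoc]
  have hPhi1 : GaussCert.Phi t₁ = ENNReal.ofReal p₁ := by
    rw [← ht₁]
    exact (ENNReal.ofReal_toReal (GaussCert.phi_ne_top t₁)).symm
  have hPhi2 : GaussCert.Phi t₂ = ENNReal.ofReal p₂ := by
    rw [← ht₂]
    exact (ENNReal.ofReal_toReal (GaussCert.phi_ne_top t₂)).symm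
  have hdpos : (0 : ℝ) < (d : ℝ) := by exact_mod_cast hd
  have hDpos : (0 : ℝ) < (d : ℝ) ^ ((1 : ℝ) / 2 - 1 / p) := Real.rpow_pos_of_pos hdpos _
  have hNnonneg : (0 : ℝ) ≤ (∑ i, |δ i| ^ p) ^ (1 / p) :=
    Real.rpow_nonneg (Finset.sum_nonneg fun _ _ => Real.rpow_nonneg (abs_nonneg _) _) _
  have ht : t₂ < t₁ := by
    by_contra hle'
    push_neg at hle'
    have hcoef : (0 : ℝ) ≤ (σ : ℝ) / (2 * (d : ℝ) ^ ((1 : ℝ) / 2 - 1 / p)) := by positivity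
    have : (σ : ℝ) / (2 * (d : ℝ) ^ ((1 : ℝ) / 2 - 1 / p)) * (t₁ - t₂) ≤ 0 :=
      mul_nonpos_of_nonneg_of_nonpos hcoef (by linarith)
    linarith
  by_cases hδ0 : δ = 0
  · rw [hδ0, add_zero]
    calc μ {Δ | h (x + Δ) = c} ≤ ENNReal.ofReal p₂ := hother c hc
      _ < ENNReal.ofReal p₁ := by
          rw [← hPhi1, ← hPhi2]
          exact GaussCert.phi_strictMono ht
      _ ≤ μ {Δ | h (x + Δ) = c₁} := hc₁
  set s₂ : ℝ := ∑ i, δ i ^ 2 with hs₂def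
  have hs₂pos : 0 < s₂ := by
    obtain ⟨i, hi⟩ := Function.ne_iff.mp hδ0
    rw [hs₂def]
    refine Finset.sum_pos' (fun j _ => sq_nonneg _) ⟨i, Finset.mem_univ i, ?_⟩
    have : δ i ≠ 0 := hi
    positivity
  set τ : ℝ := Real.sqrt s₂ * σ with hτdef
  have hτpos : 0 < τ := mul_pos (Real.sqrt_pos.mpr hs₂pos) hσR
  set r : ℝ := Real.sqrt s₂ / σ with hrdef
  have hss : Real.sqrt s₂ * Real.sqrt s₂ = s₂ := Real.mul_self_sqrt hs₂pos.le
  have hrτ : r * τ = s₂ := by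
    rw [hrdef, hτdef]
    field_simp
    linear_combination hss
  have hr2 : t₂ + r < t₁ - r := by
    have hnorm := GaussCert.sqrt_sum_sq_le hp δ
    rw [← hs₂def] at hnorm
    have h2 : (d : ℝ) ^ ((1 : ℝ) / 2 - 1 / p) * (∑ i, |δ i| ^ p) ^ (1 / p)
        < (d : ℝ) ^ ((1 : ℝ) / 2 - 1 / p)
          * ((σ : ℝ) / (2 * (d : ℝ) ^ ((1 : ℝ) / 2 - 1 / p)) * (t₁ - t₂)) :=
      mul_lt_mul_of_pos_left hδ hDpos
    have h3 : (d : ℝ) ^ ((1 : ℝ) / 2 - 1 / p)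
          * ((σ : ℝ) / (2 * (d : ℝ) ^ ((1 : ℝ) / 2 - 1 / p)) * (t₁ - t₂))
        = (σ : ℝ) * (t₁ - t₂) / 2 := by
      field_simp
    have h1 : Real.sqrt s₂ < (σ : ℝ) * (t₁ - t₂) / 2 := by
      rw [h3] at h2
      linarith
    have h4 : r < (t₁ - t₂) / 2 := by
      rw [hrdef, div_lt_iff₀ hσR]
      nlinarith
    linarith
  have hvar : s₂.toNNReal * v ≠ 0 :=
    mul_ne_zero (Real.toNNReal_pos.mpr hs₂pos).ne' hv
  have hsqrtvar : Real.sqrt ((s₂.toNNReal * v : ℝ≥0) : ℝ) = τ := by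
    rw [NNReal.coe_mul, Real.coe_toNNReal _ hs₂pos.le, hvdef, hτdef]
    push_cast
    rw [Real.sqrt_mul hs₂pos.le, Real.sqrt_sq σ.coe_nonneg]
  set g : (Fin d → ℝ) → ℝ := fun Δ => ∑ i, δ i * Δ i with hgdef
  have hgm : Measurable g := by
    rw [hgdef]
    exact Finset.measurable_sum _ fun i _ => (measurable_pi_apply i).const_mul _
  have hmapμ : μ.map g = gaussianReal 0 (s₂.toNNReal * v) := by
    rw [hμdef, hgdef]
    have hms := GaussCert.pi_map_sum d δ (fun _ => 0) v
    simp only [mul_zero, Finset.sum_const_zero] at hms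
    rw [hms, hs₂def]
  have hmapν : (Measure.pi fun i => gaussianReal (δ i) v).map g
      = gaussianReal s₂ (s₂.toNNReal * v) := by
    rw [hgdef, GaussCert.pi_map_sum d δ δ v, hs₂def]
    congr 1
    exact Finset.sum_congr rfl fun i _ => (pow_two (δ i)).symm
  set L : (Fin d → ℝ) → ℝ≥0∞ :=
    fun Δ => ENNReal.ofReal (rexp ((g Δ - s₂ / 2) / (v : ℝ))) with hLdef
  have hLm : Measurable L := (((hgm.sub_const _).div_const _).exp).ennreal_ofReal
  have hνdens : Measure.pi (fun i => gaussianReal (δ i) v) = μ.withDensity L := by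
    rw [GaussCert.pi_gauss_withDensity δ hv, hμdef]
  have hLmono : ∀ {y₁ y₂ : ℝ}, y₁ ≤ y₂ →
      ENNReal.ofReal (rexp ((y₁ - s₂ / 2) / (v : ℝ)))
        ≤ ENNReal.ofReal (rexp ((y₂ - s₂ / 2) / (v : ℝ))) := by
    intro y₁ y₂ hy
    exact ENNReal.ofReal_le_ofReal (Real.exp_le_exp.mpr
      ((div_le_div_iff_of_pos_right hvposR).mpr (by linarith)))
  set H₁ : Set (Fin d → ℝ) := g ⁻¹' (Set.Iic (τ * t₁)) with hH₁def
  have hH₁m : MeasurableSet H₁ := hgm measurableSet_Iic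
  have hμH₁ : μ H₁ = ENNReal.ofReal p₁ := by
    rw [hH₁def, ← Measure.map_apply hgm measurableSet_Iic, hmapμ,
      GaussCert.gauss_Iic _ _ hvar, hsqrtvar]
    have harg : (τ * t₁ - 0) / τ = t₁ := by
      field_simp
      ring
    rw [harg, hPhi1]
  have hνH₁ : (μ.withDensity L) H₁ = GaussCert.Phi (t₁ - r) := by
    rw [← hνdens, hH₁def, ← Measure.map_apply hgm measurableSet_Iic, hmapν,
      GaussCert.gauss_Iic _ _ hvar, hsqrtvar]
    have harg : (τ * t₁ - s₂) / τ = t₁ - r := by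
      rw [div_eq_iff hτpos.ne', sub_mul, ← hrτ]
      ring
    rw [harg]
  set H₂ : Set (Fin d → ℝ) := g ⁻¹' (Set.Ici (-(τ * t₂))) with hH₂def
  have hH₂m : MeasurableSet H₂ := hgm measurableSet_Ici
  have hμH₂ : μ H₂ = ENNReal.ofReal p₂ := by
    rw [hH₂def, ← Measure.map_apply hgm measurableSet_Ici, hmapμ,
      GaussCert.gauss_Ici _ _ hvar, hsqrtvar]
    have harg : (0 - -(τ * t₂)) / τ = t₂ := by
      field_simp
      ring
    rw [harg, hPhi2]
  have hνH₂ : (μ.withDensity L) H₂ = GaussCert.Phi (t₂ + r) := by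
    rw [← hνdens, hH₂def, ← Measure.map_apply hgm measurableSet_Ici, hmapν,
      GaussCert.gauss_Ici _ _ hvar, hsqrtvar]
    have harg : (s₂ - -(τ * t₂)) / τ = t₂ + r := by
      rw [div_eq_iff hτpos.ne', add_mul, ← hrτ]
      ring
    rw [harg]
  have hν₁ : GaussCert.Phi (t₁ - r) ≤ (μ.withDensity L) {Δ | h (x + Δ) = c₁} := by
    rw [← hνH₁]
    refine GaussCert.np_core μ hLm (hA c₁) hH₁m
      (ENNReal.ofReal (rexp ((τ * t₁ - s₂ / 2) / (v : ℝ)))) ?_ ?_ ?_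
    · intro a ha
      have hga : τ * t₁ ≤ g a := by
        have := ha.2
        simp only [hH₁def, Set.mem_preimage, Set.mem_Iic, not_le] at this
        exact this.le
      exact hLmono hga
    · intro a ha
      have hga : g a ≤ τ * t₁ := by
        have := ha.1
        simp only [hH₁def, Set.mem_preimage, Set.mem_Iic] at this
        exact this
      exact hLmono hga
    · rw [hμH₁]
      exact hc₁
  have hν₂ : (μ.withDensity L) {Δ | h (x + Δ) = c} ≤ GaussCert.Phi (t₂ + r) := by
    rw [← hνH₂]
    refine GaussCert.np_core μ hLm hH₂m (hA c)
      (ENNReal.ofReal (rexp ((-(τ * t₂) - s₂ / 2) / (v : ℝ)))) ?_ ?_ ?_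
    · intro a ha
      have hga : -(τ * t₂) ≤ g a := by
        have := ha.1
        simp only [hH₂def, Set.mem_preimage, Set.mem_Ici] at this
        exact this
      exact hLmono hga
    · intro a ha
      have hga : g a ≤ -(τ * t₂) := by
        have := ha.2
        simp only [hH₂def, Set.mem_preimage, Set.mem_Ici, not_le] at this
        exact this.le
      exact hLmono hga
    · rw [hμH₂]
      exact hother c hc
  rw [hshift c, hshift c₁, hνdens]
  calc (μ.withDensity L) {Δ | h (x + Δ) = c}
      ≤ GaussCert.Phi (t₂ + r) := hν₂
    _ < GaussCert.Phi (t₁ - r) := GaussCert.phi_strictMono hr2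
    _ ≤ (μ.withDensity L) {Δ | h (x + Δ) = c₁} := hν₁
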